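/- Let e = {v_1,...,v_r} be an edge of color 1 in a k-colored complete r-uniform r-partite hypergraph (v_i in class V_i), and assume e is essential, i.e., e is not contained in a monochromatic component of any color other than 1. For each i let Col(R_i) be the set of colors appearing on edges of the form (e \ {v_i}) ∪ {v'_i} with v'_i in V_i. Then for distinct i and j, Col(R_i) ∩ Col(R_j) = {1}. -/

import Mathlib

open Classical

variable {V : Type*}

/-- `e` is an edge of the complete `r`-uniform `r`-partite hypergraph with
partition `part`: it meets every class in exactly one vertex. -/
def IsPartiteEdge {r : ℕ} (part : V → Fin r) (e : Finset V) : Prop :=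
  ∀ i : Fin r, (e.filter fun v => part v = i).card = 1

/-- `e` is an edge of the complete `r`-uniform `(r,ℓ)`-partite hypergraph:
an `r`-set meeting every class in at most `ℓ` vertices. -/
def IsRLEdge {r : ℕ} (part : V → Fin r) (ℓ : ℕ) (e : Finset V) : Prop :=
  e.card = r ∧ ∀ i : Fin r, (e.filter fun v => part v = i).card ≤ ℓ

/-- An edge is friendly if it meets at most one class in exactly `ℓ` vertices. -/
def Friendly {r : ℕ} (part : V → Fin r) (ℓ : ℕ) (e : Finset V) : Prop :=
  (Finset.univ.filter fun i : Fin r => (e.filter fun v => part v = i).card = ℓ).card ≤ 1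

/-- `u` and `v` lie in the same monochromatic component of color `c` of the
hypergraph with edge predicate `E` and edge coloring `χ`. -/
def MonoConn {k : ℕ} (E : Finset V → Prop) (χ : Finset V → Fin k) (c : Fin k)
    (u v : V) : Prop :=
  Relation.ReflTransGen (fun a b => ∃ e : Finset V, E e ∧ χ e = c ∧ a ∈ e ∧ b ∈ e) u v

/-- The coloring `χ` is spanning: every vertex is incident with an edge of every color. -/
def Spanning {k : ℕ} (E : Finset V → Prop) (χ : Finset V → Fin k) : Prop :=
  ∀ v : V, ∀ c : Fin k, ∃ e : Finset V, E e ∧ χ e = c ∧ v ∈ e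

/-- The vertex set can be covered by at most `m` monochromatic components. -/
def CoversBy {k : ℕ} (E : Finset V → Prop) (χ : Finset V → Fin k) (m : ℕ) : Prop :=
  ∃ f : Fin m → Fin k × V, ∀ v : V, ∃ i : Fin m, MonoConn E χ (f i).1 (f i).2 v

/-- Hamming distance of the component vectors of two vertices: the number of
colors `c` for which they lie in different monochromatic components of color `c`. -/
noncomputable def HamDist {k : ℕ} (E : Finset V → Prop) (χ : Finset V → Fin k)
    (v w : V) : ℕ :=
  (Finset.univ.filter fun c : Fin k => ¬ MonoConn E χ c v w).card

theorem stmt_2 [Fintype V] [DecidableEq V] {r k : ℕ} (hr : 3 ≤ r)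
    (part : V → Fin r) (hne : ∀ i : Fin r, ∃ v, part v = i)
    (χ : Finset V → Fin k)
    (v : Fin r → V) (hv : ∀ i, part (v i) = i)
    (c₀ : Fin k) (hc₀ : χ (Finset.image v Finset.univ) = c₀)
    (hess : ∀ c : Fin k, c ≠ c₀ →
      ∃ i j : Fin r, ¬ MonoConn (IsPartiteEdge part) χ c (v i) (v j))
    (i j : Fin r) (hij : i ≠ j) :
    {c : Fin k | ∃ v' : V, part v' = i ∧
        χ (insert v' ((Finset.image v Finset.univ).erase (v i))) = c} ∩
      {c : Fin k | ∃ v' : V, part v' = j ∧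
        χ (insert v' ((Finset.image v Finset.univ).erase (v j))) = c} = {c₀} := by
  classical
  set e : Finset V := Finset.image v Finset.univ with he
  have hvinj : Function.Injective v := by
    intro a b hab
    have h := congrArg part hab
    rwa [hv, hv] at h
  have hmem : ∀ a, v a ∈ e := fun a => Finset.mem_image_of_mem v (Finset.mem_univ a)
  have hfilter : ∀ m : Fin r, e.filter (fun x => part x = m) = {v m} := by
    intro m
    ext x
    simp only [Finset.mem_filter, Finset.mem_singleton, he, Finset.mem_image,
      Finset.mem_univ, true_and]
    constructor
    · rintro ⟨⟨a, rfl⟩, hp⟩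
      rw [hv] at hp; subst hp; rfl
    · rintro rfl
      exact ⟨⟨m, rfl⟩, hv m⟩
  have hedge : ∀ (m : Fin r) (v' : V), part v' = m →
      IsPartiteEdge part (insert v' (e.erase (v m))) := by
    intro m v' hv' l
    rw [Finset.filter_insert, Finset.filter_erase]
    by_cases hlm : l = m
    · subst hlm
      rw [if_pos hv', hfilter, Finset.erase_singleton]
      simp
    · rw [if_neg (by rw [hv']; exact fun h => hlm h.symm), hfilter,
        Finset.erase_eq_of_notMem (by simp only [Finset.mem_singleton]; exact fun h => hlm (hvinj h).symm)]
      simp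
  ext c
  simp only [Set.mem_inter_iff, Set.mem_setOf_eq, Set.mem_singleton_iff]
  constructor
  · rintro ⟨⟨vi, hpi, hci⟩, ⟨vj, hpj, hcj⟩⟩
    by_contra hc
    obtain ⟨a, b, hab⟩ := hess c hc
    apply hab
    -- find l distinct from i and j
    obtain ⟨l, hli, hlj⟩ : ∃ l : Fin r, l ≠ i ∧ l ≠ j := by
      by_contra h
      push_neg at h
      have hsub : (Finset.univ : Finset (Fin r)) ⊆ {i, j} := by
        intro l _
        simp only [Finset.mem_insert, Finset.mem_singleton]
        by_cases hli : l = i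
        · exact Or.inl hli
        · exact Or.inr (h l hli)
      have h1 := Finset.card_le_card hsub
      have h2 : ({i, j} : Finset (Fin r)).card ≤ 2 :=
        (Finset.card_insert_le _ _).trans (by simp)
      simp only [Finset.card_univ, Fintype.card_fin] at h1
      omega
    set ei : Finset V := insert vi (e.erase (v i)) with hei
    set ej : Finset V := insert vj (e.erase (v j)) with hej
    have hEi : IsPartiteEdge part ei := hedge i vi hpi
    have hEj : IsPartiteEdge part ej := hedge j vj hpj
    have hmemi : ∀ m : Fin r, m ≠ i → v m ∈ ei := by
      intro m hm
      exact Finset.mem_insert_of_mem (Finset.mem_erase.mpr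
        ⟨fun h => hm (hvinj h), hmem m⟩)
    have hmemj : ∀ m : Fin r, m ≠ j → v m ∈ ej := by
      intro m hm
      exact Finset.mem_insert_of_mem (Finset.mem_erase.mpr
        ⟨fun h => hm (hvinj h), hmem m⟩)
    have hstep : ∀ m : Fin r, MonoConn (IsPartiteEdge part) χ c (v l) (v m) := by
      intro m
      by_cases hmi : m = i
      · subst hmi
        exact Relation.ReflTransGen.single ⟨ej, hEj, hcj, hmemj l hlj, hmemj m hij⟩
      · exact Relation.ReflTransGen.single ⟨ei, hEi, hci, hmemi l hli, hmemi m hmi⟩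
    have hsymm : Symmetric (fun a b => ∃ e : Finset V,
        IsPartiteEdge part e ∧ χ e = c ∧ a ∈ e ∧ b ∈ e) := by
      rintro x y ⟨f, hf1, hf2, hf3, hf4⟩
      exact ⟨f, hf1, hf2, hf4, hf3⟩
    exact Relation.ReflTransGen.trans
      ((@Relation.ReflTransGen.symmetric _ _ ⟨fun x y h => hsymm h⟩).symm _ _ (hstep a)) (hstep b)
  · rintro rfl
    refine ⟨⟨v i, hv i, ?_⟩, ⟨v j, hv j, ?_⟩⟩ <;>
      rw [Finset.insert_erase (hmem _)] <;> exact hc₀
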